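/- Single-qubit influence sampler identity for the test gate U₂ = H (Hadamard): let H = (1/√2) • !![1, 1; 1, −1]. With σ₀, σ₁, σ₂, σ₃, e₀, e₁, χ and Φ as in the context, (1/2) · ∑_{a ∈ {0,1}} (star (H.mulVec eₐ)) ⬝ᵥ (Φ((H.mulVec eₐ) ⬝ (star (H.mulVec eₐ))ᵀ)).mulVec (H.mulVec eₐ) = χ 0 0 + χ 1 1. Hence the influence sampler EX₂ = 1 − (χ 0 0 + χ 1 1). -/

import Mathlib

open Matrix

/-- The Pauli matrices `σ₀ = I, σ₁ = X, σ₂ = Y, σ₃ = Z`. -/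
noncomputable def pauli : Fin 4 → Matrix (Fin 2) (Fin 2) ℂ :=
  ![1, !![0, 1; 1, 0], !![0, -Complex.I; Complex.I, 0], !![1, 0; 0, -1]]

/-- The single-qubit quantum process with process matrix `χ`:
`Φ(ρ) = ∑ x y, χ x y • σₓ * ρ * σ_y`. -/
noncomputable def procOf (χ : Fin 4 → Fin 4 → ℂ) :
    Matrix (Fin 2) (Fin 2) ℂ → Matrix (Fin 2) (Fin 2) ℂ :=
  fun ρ => ∑ x : Fin 4, ∑ y : Fin 4, χ x y • (pauli x * ρ * pauli y)

/-- The standard basis vectors `e₀ = (1,0)` and `e₁ = (0,1)`. -/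
def stdVec : Fin 2 → (Fin 2 → ℂ) := ![![1, 0], ![0, 1]]

/-- The Hadamard gate. -/
noncomputable def Hgate : Matrix (Fin 2) (Fin 2) ℂ :=
  (1 / Real.sqrt 2 : ℂ) • !![1, 1; 1, -1]

set_option maxHeartbeats 2000000 in
theorem influence_sampler_identity_H (χ : Fin 4 → Fin 4 → ℂ) :
    (1 / 2 : ℂ) * ∑ a : Fin 2,
        star (Hgate.mulVec (stdVec a)) ⬝ᵥ
          ((procOf χ (vecMulVec (Hgate.mulVec (stdVec a)) (star (Hgate.mulVec (stdVec a))))).mulVec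
            (Hgate.mulVec (stdVec a)))
      = χ 0 0 + χ 1 1 := by
  have h2 : ((Real.sqrt 2 : ℝ) : ℂ) * ((Real.sqrt 2 : ℝ) : ℂ) = 2 := by
    norm_cast
    exact Real.mul_self_sqrt (by norm_num)
  have hne : ((Real.sqrt 2 : ℝ) : ℂ) ≠ 0 := by
    intro h; rw [h, mul_zero] at h2; norm_num at h2
  set s : ℂ := (1 / Real.sqrt 2 : ℂ) with hs
  have hv0 : Hgate.mulVec (stdVec 0) = ![s, s] := by
    funext i; fin_cases i <;> simp [Hgate, stdVec, mulVec, dotProduct, Fin.sum_univ_two, hs, one_div]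
  have hv1 : Hgate.mulVec (stdVec 1) = ![s, -s] := by
    funext i; fin_cases i <;> simp [Hgate, stdVec, mulVec, dotProduct, Fin.sum_univ_two, hs, one_div]
  have hstar : star s = s := by
    simp [hs]
  have hss : s * s = 1 / 2 := by
    rw [hs]; rw [div_mul_div_comm, h2]; norm_num
  rw [Fin.sum_univ_two, hv0, hv1]
  have hstarv0 : star ![s, s] = ![s, s] := by
    funext i; fin_cases i <;> simp [hstar]
  have hstarv1 : star ![s, -s] = ![s, -s] := by
    funext i; fin_cases i <;> simp [hstar]
  rw [hstarv0, hstarv1]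
  simp [procOf, pauli, vecMulVec, mulVec, dotProduct, Fin.sum_univ_four, Fin.sum_univ_two,
    Matrix.mul_apply, Matrix.vecHead, Matrix.vecTail]
  have h4 : ((Real.sqrt 2 : ℝ) : ℂ)⁻¹ ^ 4 = 1 / 4 := by
    rw [show (4:ℕ) = 2*2 from rfl, pow_mul, sq (((Real.sqrt 2 : ℝ) : ℂ)⁻¹), sq, ← mul_inv, h2]
    norm_num
  ring_nf
  rw [show s ^ 4 = 1 / 4 by rw [show s ^ 4 = (s * s) * (s * s) by ring, hss]; norm_num]
  ring
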